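/- Let u = w t^s and v = x t^r be elements of G = Z^n ⋊_φ Z in normal form, and suppose u and v are conjugate in G and φ^s is the identity automorphism. Then s = r and x = φ^e(w) for some e ∈ Z. -/
import Mathlib
open Matrix

def mAut {n : ℕ} (M : (Matrix (Fin n) (Fin n) ℤ)ˣ) : (Fin n → ℤ) ≃+ (Fin n → ℤ) where
  toFun v := (M : Matrix (Fin n) (Fin n) ℤ) *ᵥ v
  invFun v := (↑M⁻¹ : Matrix (Fin n) (Fin n) ℤ) *ᵥ v
  left_inv v := by simp [Matrix.mulVec_mulVec]
  right_inv v := by simp [Matrix.mulVec_mulVec]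
  map_add' u v := by simp [Matrix.mulVec_add]

def tAct {n : ℕ} (M : (Matrix (Fin n) (Fin n) ℤ)ˣ) :
    Multiplicative ℤ →* MulAut (Multiplicative (Fin n → ℤ)) :=
  zpowersHom _ (AddEquiv.toMultiplicative (mAut M))

abbrev G (n : ℕ) (M : (Matrix (Fin n) (Fin n) ℤ)ˣ) :=
  SemidirectProduct (Multiplicative (Fin n → ℤ)) (Multiplicative ℤ) (tAct M)

def nf {n : ℕ} (M : (Matrix (Fin n) (Fin n) ℤ)ˣ) (w : Fin n → ℤ) (k : ℤ) : G n M :=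
  SemidirectProduct.inl (Multiplicative.ofAdd w) * SemidirectProduct.inr (Multiplicative.ofAdd k)

def mAutHom {n : ℕ} : (Matrix (Fin n) (Fin n) ℤ)ˣ →* Multiplicative (Fin n → ℤ) ≃* Multiplicative (Fin n → ℤ) where
  toFun M := AddEquiv.toMultiplicative (mAut M)
  map_one' := by ext v; simp [mAut]
  map_mul' A B := by ext v; simp [mAut, Matrix.mulVec_mulVec]

lemma tAct_apply {n : ℕ} (M : (Matrix (Fin n) (Fin n) ℤ)ˣ) (k : ℤ) (v : Fin n → ℤ) :
    (tAct M (Multiplicative.ofAdd k)) (Multiplicative.ofAdd v)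
      = Multiplicative.ofAdd ((↑(M ^ k) : Matrix (Fin n) (Fin n) ℤ) *ᵥ v) := by
  have : (AddEquiv.toMultiplicative (mAut M)) ^ k = mAutHom (M ^ k) := by
    rw [map_zpow]; rfl
  simp only [tAct, zpowersHom_apply, toAdd_ofAdd, this]
  rfl

/-- If u = w t^s, v = x t^r are conjugate and φ^s is the identity, then s = r and x = φ^e(w). -/
theorem conj_of_pow_id {n : ℕ} (M : (Matrix (Fin n) (Fin n) ℤ)ˣ)
    (w x : Fin n → ℤ) (s r : ℤ) (hs : M ^ s = 1)
    (h : IsConj (nf M w s) (nf M x r)) :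
    s = r ∧ ∃ e : ℤ, x = (↑(M ^ e) : Matrix (Fin n) (Fin n) ℤ) *ᵥ w := by
  obtain ⟨cu, hc⟩ := h
  rw [SemiconjBy] at hc
  set c : G n M := ↑cu with hcdef
  have hul : (nf M w s).left = Multiplicative.ofAdd w := by simp [nf]
  have hur : (nf M w s).right = Multiplicative.ofAdd s := by simp [nf]
  have hvl : (nf M x r).left = Multiplicative.ofAdd x := by simp [nf]
  have hvr : (nf M x r).right = Multiplicative.ofAdd r := by simp [nf]
  have hright := congrArg SemidirectProduct.right hc
  simp only [SemidirectProduct.mul_right, hur, hvr] at hright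
  have hr : s = r := by
    have := congrArg Multiplicative.toAdd hright
    simp only [toAdd_mul, toAdd_ofAdd] at this
    omega
  refine ⟨hr, Multiplicative.toAdd c.right, ?_⟩
  have hleft := congrArg SemidirectProduct.left hc
  simp only [SemidirectProduct.mul_left, hul, hur, hvl, hvr] at hleft
  have hcl : c.left = Multiplicative.ofAdd (Multiplicative.toAdd c.left) := rfl
  have hcr : c.right = Multiplicative.ofAdd (Multiplicative.toAdd c.right) := rfl
  rw [hcl, hcr, tAct_apply, tAct_apply] at hleft
  have hadd := congrArg Multiplicative.toAdd hleft
  simp only [toAdd_mul, toAdd_ofAdd] at hadd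
  rw [← hr, hs] at hadd
  simp only [Units.val_one, Matrix.one_mulVec] at hadd
  have : x = (↑(M ^ Multiplicative.toAdd c.right) : Matrix (Fin n) (Fin n) ℤ) *ᵥ w := by
    have h2 := hadd
    funext i
    have := congrFun h2 i
    simp [Pi.add_apply] at this ⊢
    omega
  exact this
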